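/- Let A be a real n×n matrix with a_ii ≥ 0, a_ij = a_ji ≤ 0 for i ≠ j, and ∑_j a_ij = 0 for all i, and let ∼ be the connectivity equivalence relation (i ∼ j iff there is a negative-entry chain from i to j, or i = j). Then Ran A = { x ∈ ℝⁿ : for every equivalence class I_α, ∑_{i ∈ I_α} x_i = 0 }. -/

import Mathlib

open Matrix BigOperators Classical

section Aux

variable {n : ℕ}

/-- If `y` is constant on connectivity classes, then `A *ᵥ y = 0`. -/
lemma aux_mulVec_eq_zero (A : Matrix (Fin n) (Fin n) ℝ)
    (hoff : ∀ i j, i ≠ j → A i j ≤ 0) (hrow : ∀ i, ∑ j, A i j = 0)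
    (y : Fin n → ℝ)
    (hy : ∀ i j, Relation.ReflTransGen (fun a b => A a b < 0) i j → y i = y j) :
    A.mulVec y = 0 := by
  funext i
  have h1 : A.mulVec y i = ∑ j, A i j * (y j - y i) := by
    simp only [mulVec, dotProduct, mul_sub, Finset.sum_sub_distrib, ← Finset.sum_mul, hrow i]
    ring
  rw [h1, Pi.zero_apply]
  apply Finset.sum_eq_zero
  intro j _
  by_cases hij : i = j
  · subst hij; ring
  · rcases lt_or_eq_of_le (hoff i j hij) with h | h
    · rw [hy i j (Relation.ReflTransGen.single h)]; ring
    · rw [h]; ring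

/-- If `A *ᵥ y = 0` then `y` is constant on connectivity classes. -/
lemma aux_const_of_mulVec_eq_zero (A : Matrix (Fin n) (Fin n) ℝ)
    (hsymm : ∀ i j, A i j = A j i) (hoff : ∀ i j, i ≠ j → A i j ≤ 0)
    (hrow : ∀ i, ∑ j, A i j = 0)
    (y : Fin n → ℝ) (hy : A.mulVec y = 0) :
    ∀ i j, Relation.ReflTransGen (fun a b => A a b < 0) i j → y i = y j := by
  have base : ∀ i j, A i j < 0 → y i = y j := by
    have hq : ∑ i, ∑ j, (-(A i j)) * (y i - y j) ^ 2 = 0 := by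
      have expand : ∀ i j : Fin n, (-(A i j)) * (y i - y j) ^ 2 =
          (-(A i j)) * y i ^ 2 + 2 * (A i j * y j) * y i + (-(A i j)) * y j ^ 2 := by
        intro i j; ring
      have S1 : ∑ i, ∑ j : Fin n, (-(A i j)) * y i ^ 2 = 0 := by
        apply Finset.sum_eq_zero; intro i _
        rw [← Finset.sum_mul, Finset.sum_neg_distrib, hrow i, neg_zero, zero_mul]
      have S2 : ∑ i, ∑ j : Fin n, 2 * (A i j * y j) * y i = 0 := by
        apply Finset.sum_eq_zero; intro i _
        have : ∑ j, A i j * y j = 0 := by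
          have := congrFun hy i
          simpa [mulVec, dotProduct] using this
        have h2 : ∑ j, 2 * (A i j * y j) * y i = 2 * (∑ j, A i j * y j) * y i := by
          rw [Finset.mul_sum, Finset.sum_mul]
        rw [h2, this]; ring
      have S3 : ∑ i, ∑ j : Fin n, (-(A i j)) * y j ^ 2 = 0 := by
        rw [Finset.sum_comm]
        apply Finset.sum_eq_zero; intro j _
        have hcol : ∑ i, A i j = 0 := by
          rw [show (∑ i, A i j) = ∑ i, A j i from Finset.sum_congr rfl
            (fun i _ => hsymm i j)]
          exact hrow j
        rw [← Finset.sum_mul, Finset.sum_neg_distrib, hcol, neg_zero, zero_mul]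
      calc ∑ i, ∑ j, (-(A i j)) * (y i - y j) ^ 2
          = ∑ i, ∑ j : Fin n, ((-(A i j)) * y i ^ 2 + 2 * (A i j * y j) * y i
              + (-(A i j)) * y j ^ 2) := by
            exact Finset.sum_congr rfl fun i _ => Finset.sum_congr rfl fun j _ => expand i j
        _ = 0 := by
            simp only [Finset.sum_add_distrib]
            rw [S1, S2, S3]; ring
    intro i j hij
    -- each summand is nonnegative, total 0, hence each is zero
    have hq' : ∑ p ∈ Finset.univ ×ˢ Finset.univ,
        (-(A p.1 p.2)) * (y p.1 - y p.2) ^ 2 = 0 := by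
      rw [Finset.sum_product]; exact hq
    have hnonneg : ∀ p ∈ Finset.univ ×ˢ (Finset.univ : Finset (Fin n)),
        0 ≤ (-(A p.1 p.2)) * (y p.1 - y p.2) ^ 2 := by
      rintro ⟨a, b⟩ -
      by_cases hab : a = b
      · subst hab; simp
      · have hle : A a b ≤ 0 := hoff a b hab
        have h1 : (0:ℝ) ≤ -(A a b) := by linarith
        positivity
    have hzero := (Finset.sum_eq_zero_iff_of_nonneg hnonneg).mp hq' (i, j) (by simp)
    rcases mul_eq_zero.mp hzero with h | h
    · simp only [neg_eq_zero] at h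
      exact absurd h (ne_of_lt hij)
    · have hy0 : y i - y j = 0 := by
        have := pow_eq_zero_iff (two_ne_zero) |>.mp h
        exact this
      linarith
  intro i j hij
  induction hij with
  | refl => rfl
  | tail _ hbc ih => exact ih.trans (base _ _ hbc)

/-- For a symmetric operator on a finite-dimensional real inner product space,
the range is the orthogonal complement of the kernel. -/
lemma aux_range_eq_ker_orthogonal
    (T : EuclideanSpace ℝ (Fin n) →ₗ[ℝ] EuclideanSpace ℝ (Fin n))
    (hT : T.IsSymmetric) :
    LinearMap.range T = (LinearMap.ker T)ᗮ := by
  have hle : LinearMap.range T ≤ (LinearMap.ker T)ᗮ := by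
    rintro _ ⟨y, rfl⟩
    rw [Submodule.mem_orthogonal]
    intro u hu
    rw [LinearMap.mem_ker] at hu
    rw [← hT u y, hu, inner_zero_left]
  have h1 := LinearMap.finrank_range_add_finrank_ker T
  have h2 := Submodule.finrank_add_finrank_orthogonal (K := LinearMap.ker T)
  exact Submodule.eq_of_le_of_finrank_eq hle (by omega)

/-- Fiberwise summation over connectivity classes. -/
lemma aux_sum_mul_eq_zero (R' : Fin n → Fin n → Prop)
    (hs : Symmetric (Relation.ReflTransGen R')) (v x : Fin n → ℝ)
    (hv : ∀ a b, Relation.ReflTransGen R' a b → v a = v b)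
    (hx : ∀ i, ∑ j ∈ Finset.univ.filter
        (fun j => Relation.ReflTransGen R' i j), x j = 0) :
    ∑ j, v j * x j = 0 := by
  classical
  let s : Setoid (Fin n) :=
    ⟨Relation.ReflTransGen R',
      ⟨fun _ => Relation.ReflTransGen.refl, fun h => hs h, fun h1 h2 => h1.trans h2⟩⟩
  rw [← Finset.sum_fiberwise_of_maps_to (g := fun j => Quotient.mk s j)
    (t := Finset.univ) (fun a _ => Finset.mem_univ _) (fun j => v j * x j)]
  apply Finset.sum_eq_zero
  intro q _
  have hfilter : Finset.univ.filter (fun j => Quotient.mk s j = q) =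
      Finset.univ.filter (fun j => Relation.ReflTransGen R' q.out j) := by
    ext j
    simp only [Finset.mem_filter, Finset.mem_univ, true_and]
    constructor
    · intro h
      have : Quotient.mk s j = Quotient.mk s q.out := by rw [h, Quotient.out_eq]
      exact hs (Quotient.eq.mp this)
    · intro h
      rw [← Quotient.out_eq q]
      exact Quotient.sound (hs h)
  rw [hfilter]
  have : ∀ j ∈ Finset.univ.filter (fun j => Relation.ReflTransGen R' q.out j),
      v j * x j = v q.out * x j := by
    intro j hj
    rw [Finset.mem_filter] at hj
    rw [hv q.out j hj.2]
  rw [Finset.sum_congr rfl this, ← Finset.mul_sum, hx q.out, mul_zero]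

end Aux

theorem diag_dominant_range (n : ℕ) (A : Matrix (Fin n) (Fin n) ℝ)
    (hdiag : ∀ i, 0 ≤ A i i)
    (hsymm : ∀ i j, A i j = A j i)
    (hoff : ∀ i j, i ≠ j → A i j ≤ 0)
    (hrow : ∀ i, ∑ j, A i j = 0) (x : Fin n → ℝ) :
    (∃ y, A.mulVec y = x) ↔
      ∀ i, ∑ j ∈ Finset.univ.filter
          (fun j => Relation.ReflTransGen (fun a b => A a b < 0) i j), x j = 0 := by
  have hRsymm : Symmetric (Relation.ReflTransGen (fun a b : Fin n => A a b < 0)) :=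
    fun a b hab => (@Relation.ReflTransGen.stdSymm _ _ ⟨fun a b h => by rw [hsymm] at h; exact h⟩).symm a b hab
  have hAT : Aᵀ = A := by ext i j; exact hsymm j i
  constructor
  · rintro ⟨y, rfl⟩ i
    set z : Fin n → ℝ :=
      fun j => if Relation.ReflTransGen (fun a b => A a b < 0) i j then (1:ℝ) else 0 with hz
    have hzconst : ∀ a b, Relation.ReflTransGen (fun a b => A a b < 0) a b → z a = z b := by
      intro a b hab
      simp only [hz]
      by_cases h : Relation.ReflTransGen (fun a b => A a b < 0) i a
      · rw [if_pos h, if_pos (h.trans hab)]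
      · rw [if_neg h, if_neg (fun hb => h (hb.trans (hRsymm hab)))]
    have hzker : A.mulVec z = 0 := aux_mulVec_eq_zero A hoff hrow z hzconst
    have key : ∑ j ∈ Finset.univ.filter
        (fun j => Relation.ReflTransGen (fun a b => A a b < 0) i j), A.mulVec y j
        = z ⬝ᵥ A.mulVec y := by
      rw [dotProduct, Finset.sum_filter]
      apply Finset.sum_congr rfl
      intro j _
      simp only [hz]
      by_cases h : Relation.ReflTransGen (fun a b => A a b < 0) i j <;> simp [h]
    rw [key, dotProduct_mulVec, ← Matrix.mulVec_transpose, hAT, hzker, zero_dotProduct]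
  · intro h
    set T : EuclideanSpace ℝ (Fin n) →ₗ[ℝ] EuclideanSpace ℝ (Fin n) :=
      Matrix.toEuclideanLin A with hT
    have hTsymm : T.IsSymmetric := by
      rw [hT, ← Matrix.isHermitian_iff_isSymmetric]
      rw [Matrix.IsHermitian, conjTranspose]
      ext i j
      simp [hsymm j i]
    have hx : (WithLp.equiv 2 (Fin n → ℝ)).symm x ∈ (LinearMap.ker T)ᗮ := by
      rw [Submodule.mem_orthogonal]
      intro u hu
      rw [LinearMap.mem_ker, hT] at hu
      have hu' : A.mulVec (WithLp.equiv 2 (Fin n → ℝ) u) = 0 := by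
        have := congrArg (WithLp.equiv 2 (Fin n → ℝ)) hu
        rwa [show ∀ v, WithLp.equiv 2 (Fin n → ℝ) (Matrix.toEuclideanLin A v) = A *ᵥ WithLp.equiv 2 (Fin n → ℝ) v from fun v => rfl] at this
      have hconst := aux_const_of_mulVec_eq_zero A hsymm hoff hrow _ hu'
      have : ∑ j, (WithLp.equiv 2 (Fin n → ℝ) u) j * x j = 0 :=
        aux_sum_mul_eq_zero _ hRsymm _ x hconst h
      simpa [PiLp.inner_apply, RCLike.inner_apply, WithLp.equiv, mul_comm] using this
    rw [← aux_range_eq_ker_orthogonal T hTsymm] at hx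
    obtain ⟨y, hy⟩ := hx
    refine ⟨WithLp.equiv 2 (Fin n → ℝ) y, ?_⟩
    have := congrArg (WithLp.equiv 2 (Fin n → ℝ)) hy
    rw [hT, show ∀ v, WithLp.equiv 2 (Fin n → ℝ) (Matrix.toEuclideanLin A v) = A *ᵥ WithLp.equiv 2 (Fin n → ℝ) v from fun v => rfl] at this
    simpa using this
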